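/- arXiv:0805.1385 — 2 statements merged into one kernel-verified Lean document; each statement's English description precedes it below -/
import Mathlib

section
/- There exists a natural number N₀ such that for all natural numbers N ≥ 10 (in fact for all N ≥ N₀, where for N below N₀ the paper verifies the claim by direct computation; one may take N₀ = 10) and all natural numbers k with 1 ≤ k and 2·k ≤ N: if log₂ C(N, k) ≤ N/2, then H(k/N) ≤ 0.8. -/
noncomputable def binEntropy2 (x : ℝ) : ℝ :=
  -(x * Real.logb 2 x) - (1 - x) * Real.logb 2 (1 - x)

lemma nat_step_up {N k j : ℕ} (hjk : j < k) :
    N.choose j * (N - k) ≤ N.choose (j+1) * k := by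
  have h1 : N.choose (j+1) * (j+1) = N.choose j * (N - j) := Nat.choose_succ_right_eq N j
  have key : N.choose j * (N - k) * (j+1) ≤ N.choose (j+1) * k * (j+1) := by
    calc N.choose j * (N - k) * (j+1) = N.choose j * ((N-k)*(j+1)) := by ring
      _ ≤ N.choose j * ((N-j)*k) := by
          refine Nat.mul_le_mul_left _ ?_
          calc (N - k) * (j+1) ≤ (N - k) * k := Nat.mul_le_mul_left _ hjk
            _ ≤ (N - j) * k := Nat.mul_le_mul_right _ (Nat.sub_le_sub_left hjk.le N)
      _ = N.choose j * (N - j) * k := by ring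
      _ = N.choose (j+1) * k * (j+1) := by rw [← h1]; ring
  exact Nat.le_of_mul_le_mul_right key (Nat.succ_pos j)

lemma nat_step_down {N k j : ℕ} (hkj : k ≤ j) :
    N.choose (j+1) * k ≤ N.choose j * (N - k) := by
  have h1 : N.choose (j+1) * (j+1) = N.choose j * (N - j) := Nat.choose_succ_right_eq N j
  have key : N.choose (j+1) * k * (j+1) ≤ N.choose j * (N - k) * (j+1) := by
    calc N.choose (j+1) * k * (j+1) = N.choose (j+1) * (j+1) * k := by ring
      _ = N.choose j * (N - j) * k := by rw [h1]
      _ = N.choose j * ((N-j)*k) := by ring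
      _ ≤ N.choose j * ((N-k)*(j+1)) := by
          refine Nat.mul_le_mul_left _ ?_
          calc (N - j) * k ≤ (N - k) * k := Nat.mul_le_mul_right _ (Nat.sub_le_sub_left hkj N)
            _ ≤ (N - k) * (j+1) := Nat.mul_le_mul_left _ (by omega)
      _ = N.choose j * (N - k) * (j+1) := by ring
  exact Nat.le_of_mul_le_mul_right key (Nat.succ_pos j)

/-- Key: `1 ≤ (N+1) * C(N,k) * p^k * q^(N-k)` where `p = k/N`, `q = 1 - p`. -/
lemma key_choose (N k : ℕ) (hk : 1 ≤ k) (h2k : 2*k ≤ N) :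
    (1:ℝ) ≤ (N+1) * (N.choose k) * ((k:ℝ)/N)^k * (1 - (k:ℝ)/N)^(N-k) := by
  have hkN : k ≤ N := by omega
  have hN0 : 0 < N := by omega
  have hNR : (0:ℝ) < N := by exact_mod_cast hN0
  set p : ℝ := (k:ℝ)/N with hp
  have hq : 1 - p = ((N - k : ℕ) : ℝ)/N := by
    rw [hp, Nat.cast_sub hkN]; field_simp
  have hp0 : 0 ≤ p := by positivity
  have hq0 : 0 ≤ 1 - p := by rw [hq]; positivity
  set t : ℕ → ℝ := fun j => (N.choose j : ℝ) * p^j * (1-p)^(N-j) with ht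
  have ht0 : ∀ j, 0 ≤ t j := fun j => by positivity
  -- sum of terms is 1
  have hsum : ∑ j ∈ Finset.range (N+1), t j = 1 := by
    have := add_pow p (1-p) N
    simp only [add_sub_cancel, one_pow] at this
    rw [ht]
    calc ∑ j ∈ Finset.range (N+1), (N.choose j : ℝ) * p^j * (1-p)^(N-j)
        = ∑ j ∈ Finset.range (N+1), p^j * (1-p)^(N-j) * (N.choose j : ℝ) := by
          apply Finset.sum_congr rfl; intros; ring
      _ = 1 := this.symm
  -- each term ≤ t k
  have step_up : ∀ j, j < k → t j ≤ t (j+1) := by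
    intro j hjk
    have hjN : j + 1 ≤ N := by omega
    have hsub : N - j = (N - (j+1)) + 1 := by omega
    have h1 : (N.choose j : ℝ) * (1-p) ≤ (N.choose (j+1) : ℝ) * p := by
      rw [hq, hp]
      rw [div_eq_mul_inv, div_eq_mul_inv, ← mul_assoc, ← mul_assoc]
      apply mul_le_mul_of_nonneg_right _ (by positivity)
      exact_mod_cast nat_step_up hjk
    calc t j = ((N.choose j : ℝ) * (1-p)) * (p^j * (1-p)^(N-(j+1))) := by
          rw [ht]; simp only [hsub]; ring
      _ ≤ ((N.choose (j+1) : ℝ) * p) * (p^j * (1-p)^(N-(j+1))) := by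
          apply mul_le_mul_of_nonneg_right h1 (by positivity)
      _ = t (j+1) := by rw [ht]; simp only [pow_succ]; ring
  have step_down : ∀ j, k ≤ j → j < N → t (j+1) ≤ t j := by
    intro j hkj hjN
    have hsub : N - j = (N - (j+1)) + 1 := by omega
    have h1 : (N.choose (j+1) : ℝ) * p ≤ (N.choose j : ℝ) * (1-p) := by
      rw [hq, hp]
      rw [div_eq_mul_inv, div_eq_mul_inv, ← mul_assoc, ← mul_assoc]
      apply mul_le_mul_of_nonneg_right _ (by positivity)
      exact_mod_cast nat_step_down hkj
    calc t (j+1) = ((N.choose (j+1) : ℝ) * p) * (p^j * (1-p)^(N-(j+1))) := by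
          rw [ht]; simp only [pow_succ]; ring
      _ ≤ ((N.choose j : ℝ) * (1-p)) * (p^j * (1-p)^(N-(j+1))) := by
          apply mul_le_mul_of_nonneg_right h1 (by positivity)
      _ = t j := by rw [ht]; simp only [hsub]; ring
  have below : ∀ d, t (k - d) ≤ t k := by
    intro d
    induction d with
    | zero => simp
    | succ d ih =>
      rcases le_or_gt k d with h | h
      · have : k - (d+1) = k - d := by omega
        rw [this]; exact ih
      · have h2 : k - (d+1) < k := by omega
        have : (k - (d+1)) + 1 = k - d := by omega
        calc t (k - (d+1)) ≤ t ((k - (d+1)) + 1) := step_up _ h2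
          _ = t (k - d) := by rw [this]
          _ ≤ t k := ih
  have above : ∀ d, k + d ≤ N → t (k + d) ≤ t k := by
    intro d
    induction d with
    | zero => simp
    | succ d ih =>
      intro hd
      have : k + (d+1) = (k + d) + 1 := by omega
      rw [this]
      calc t ((k+d)+1) ≤ t (k+d) := step_down _ (by omega) (by omega)
        _ ≤ t k := ih (by omega)
  have hmax : ∀ j ∈ Finset.range (N+1), t j ≤ t k := by
    intro j hj
    rw [Finset.mem_range] at hj
    rcases le_or_gt j k with h | h
    · have : j = k - (k - j) := by omega
      rw [this]; exact below _
    · have : j = k + (j - k) := by omega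
      rw [this]; exact above _ (by omega)
  have : (1:ℝ) ≤ (N+1) * t k := by
    calc (1:ℝ) = ∑ j ∈ Finset.range (N+1), t j := hsum.symm
      _ ≤ ∑ _j ∈ Finset.range (N+1), t k := Finset.sum_le_sum hmax
      _ = (N+1) * t k := by
          rw [Finset.sum_const, Finset.card_range]; push_cast; ring
  calc (1:ℝ) ≤ (N+1) * t k := this
    _ = (N+1) * (N.choose k) * p^k * (1-p)^(N-k) := by rw [ht]; ring

/-- Intermediate entropy bound in the proof of Lemma 6: there is an `N₀`
(one may take `N₀ = 10`) such that for all `N ≥ N₀` and all `k` with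
`1 ≤ k` and `2k ≤ N`, if `log₂ C(N, k) ≤ N/2` then `H(k/N) ≤ 0.8`. -/
theorem binEntropy_le_of_logb_choose_le :
    ∃ N₀ : ℕ, ∀ N : ℕ, N₀ ≤ N → ∀ k : ℕ, 1 ≤ k → 2 * k ≤ N →
      Real.logb 2 (N.choose k : ℝ) ≤ (N : ℝ) / 2 →
      binEntropy2 ((k : ℝ) / (N : ℝ)) ≤ 0.8 := by
  use 100
  intro N hN100 k hk h2k hlog
  have hkN : k ≤ N := by omega
  have hNR : (0:ℝ) < N := by exact_mod_cast Nat.pos_of_ne_zero (by omega)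
  have hNge : (100:ℝ) ≤ N := by exact_mod_cast hN100
  set p : ℝ := (k:ℝ)/N with hp
  have hp0 : 0 < p := by rw [hp]; positivity
  have hphalf : p ≤ 1/2 := by
    rw [hp, div_le_div_iff₀ hNR (by norm_num)]
    have : (2:ℝ) * k ≤ N := by exact_mod_cast h2k
    linarith
  have hq0 : 0 < 1 - p := by linarith
  have hC1 : (1:ℝ) ≤ (N.choose k : ℝ) := by
    exact_mod_cast Nat.one_le_iff_ne_zero.mpr (Nat.choose_pos hkN).ne'
  have hC0 : (0:ℝ) < (N.choose k : ℝ) := lt_of_lt_of_le one_pos hC1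
  -- from key lemma
  have hkey := key_choose N k hk h2k
  rw [← hp] at hkey
  set X : ℝ := (N+1) * (N.choose k) * p^k * (1-p)^(N-k) with hX
  have hlogX : 0 ≤ Real.logb 2 X := Real.logb_nonneg (by norm_num) hkey
  have hXsplit : Real.logb 2 X =
      Real.logb 2 ((N:ℝ)+1) + Real.logb 2 (N.choose k) + k * Real.logb 2 p
        + ((N:ℝ) - k) * Real.logb 2 (1-p) := by
    have h1 : ((N:ℝ)+1) ≠ 0 := by positivity
    have h2 : (N.choose k : ℝ) ≠ 0 := hC0.ne'
    have h3 : p^k ≠ 0 := by positivity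
    have h4 : (1-p)^(N-k) ≠ 0 := by positivity
    rw [hX, Real.logb_mul (by positivity) h4, Real.logb_mul (by positivity) h3,
      Real.logb_mul h1 h2, Real.logb_pow, Real.logb_pow]
    have : ((N - k : ℕ) : ℝ) = (N:ℝ) - k := by rw [Nat.cast_sub hkN]
    rw [this]
  -- N * entropy
  have hNp : (N:ℝ) * p = k := by rw [hp]; field_simp
  have hNq : (N:ℝ) * (1 - p) = (N:ℝ) - k := by rw [hp]; field_simp
  have hent : (N:ℝ) * binEntropy2 p =
      -((k:ℝ) * Real.logb 2 p) - ((N:ℝ) - k) * Real.logb 2 (1-p) := by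
    unfold binEntropy2
    rw [← hNp]
    ring
  -- bound on logb(N+1)
  have hlogN : Real.logb 2 ((N:ℝ)+1) ≤ 0.3 * N := by
    have hs : Real.sqrt ((N:ℝ)+1) ≤ 0.1 * N + 1 := by
      rw [Real.sqrt_le_iff]
      constructor
      · linarith
      · nlinarith
    have hls : Real.log (Real.sqrt ((N:ℝ)+1)) ≤ Real.sqrt ((N:ℝ)+1) - 1 :=
      Real.log_le_sub_one_of_pos (Real.sqrt_pos.mpr (by linarith))
    have hlog1 : Real.log ((N:ℝ)+1) ≤ 0.2 * N := by
      have := Real.log_sqrt (x := (N:ℝ)+1) (by linarith)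
      linarith
    have hl2 : (0.6931471803:ℝ) < Real.log 2 := Real.log_two_gt_d9
    rw [Real.logb, div_le_iff₀ (by linarith)]
    nlinarith
  -- combine
  have hcomb : (N:ℝ) * binEntropy2 p ≤ 0.8 * N := by
    rw [hent]
    have := hXsplit ▸ hlogX
    nlinarith [hlog, hlogN]
  have := (mul_le_mul_iff_right₀ hNR).mp (by linarith [hcomb] : (N:ℝ) * binEntropy2 p ≤ (N:ℝ) * 0.8)
  linarith [this]
end

section
/- For all natural numbers N and r with 1 ≤ r ≤ N, one has r · ∑_{i=0}^{r} C(N, i) ≤ (N + 1) · ∑_{i=0}^{r−1} C(N, i); equivalently, the ratio of the partial sum of binomial coefficients up to r to the partial sum up to r−1 is at most (N+1)/r. -/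
/-- Ratio bound on consecutive partial sums of binomial coefficients
(from the proof of Theorem 12): for `1 ≤ r ≤ N`,
`r · ∑_{i=0}^{r} C(N, i) ≤ (N + 1) · ∑_{i=0}^{r-1} C(N, i)`. -/
theorem partial_sum_choose_ratio_le
    (N r : ℕ) (hr : 1 ≤ r) (hrN : r ≤ N) :
    r * ∑ i ∈ Finset.range (r + 1), N.choose i ≤
      (N + 1) * ∑ i ∈ Finset.range r, N.choose i := by
  obtain ⟨s, rfl⟩ := Nat.exists_eq_add_of_le hr
  set S := ∑ i ∈ Finset.range (1 + s), N.choose i with hS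
  have hmem : N.choose s ≤ S := by
    apply Finset.single_le_sum (f := fun i => N.choose i) (fun _ _ => Nat.zero_le _)
    simp [Nat.lt_succ_iff, Nat.add_comm]
  have hkey : N.choose (1 + s) * (1 + s) = N.choose s * (N - s) := by
    have := Nat.choose_succ_right_eq N s
    simpa [Nat.add_comm] using this
  have hsum : ∑ i ∈ Finset.range (1 + s + 1), N.choose i = S + N.choose (1 + s) := by
    rw [Finset.sum_range_succ]
  rw [hsum, Nat.mul_add]
  have h1 : (1 + s) * N.choose (1 + s) ≤ (N - s) * S := by
    calc (1 + s) * N.choose (1 + s) = N.choose s * (N - s) := by rw [Nat.mul_comm, hkey]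
    _ ≤ S * (N - s) := Nat.mul_le_mul_right _ hmem
    _ = (N - s) * S := Nat.mul_comm _ _
  have h2 : (1 + s) * S + (N - s) * S ≤ (N + 1) * S := by
    rw [← Nat.add_mul]
    apply Nat.mul_le_mul_right
    omega
  calc (1 + s) * S + (1 + s) * N.choose (1 + s) ≤ (1 + s) * S + (N - s) * S :=
        Nat.add_le_add_left h1 _
  _ ≤ (N + 1) * S := h2
end
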